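/- Let Ω ⊆ ℝⁿ be open and μ a locally finite signed Radon measure on Ω satisfying |μ(U)| ≤ C·H^{n-1}(∂U) for every smooth bounded open set U ⊂⊂ Ω. Then the total variation ‖μ‖ is absolutely continuous with respect to H^{n-1}: H^{n-1}(A) = 0 implies ‖μ‖(A) = 0 for every Borel set A ⊆ Ω. -/

import Mathlib

open MeasureTheory Topology Filter Set Metric
open scoped ENNReal NNReal RealInnerProductSpace

noncomputable section

abbrev Eucl (n : ℕ) := EuclideanSpace ℝ (Fin n)

namespace BVPaper

variable {n : ℕ}

/-- Integral of a function against a signed measure. -/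
def sInt (φ : Eucl n → ℝ) (μ : SignedMeasure (Eucl n)) : ℝ :=
  (∫ x, φ x ∂μ.toJordanDecomposition.posPart) - ∫ x, φ x ∂μ.toJordanDecomposition.negPart

/-- `φ` is a smooth test function compactly supported in `Ω`. -/
def IsTest (Ω : Set (Eucl n)) (φ : Eucl n → ℝ) : Prop :=
  ContDiff ℝ (⊤ : ℕ∞) φ ∧ HasCompactSupport φ ∧ tsupport φ ⊆ Ω

/-- `Du` is the distributional gradient of `u` on the open set `Ω`. -/
def IsDistGrad (Ω : Set (Eucl n)) (u : Eucl n → ℝ) (Du : Fin n → SignedMeasure (Eucl n)) : Prop :=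
  ∀ (i : Fin n) (φ : Eucl n → ℝ), IsTest Ω φ →
    (∫ x in Ω, u x * fderiv ℝ φ x (EuclideanSpace.single i 1)) = - sInt φ (Du i)

/-- `ν` is the (Euclidean) total variation measure of the vector measure `Du`. -/
def IsVarMeasure (Du : Fin n → SignedMeasure (Eucl n)) (ν : Measure (Eucl n)) : Prop :=
  ∀ A : Set (Eucl n), MeasurableSet A →
    ν A = ⨆ (P : ℕ → Set (Eucl n)) (_ : ∀ j, MeasurableSet (P j))
      (_ : Pairwise (Function.onFun Disjoint P)) (_ : (⋃ j, P j) = A),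
      ∑' j, ENNReal.ofReal (Real.sqrt (∑ i : Fin n, ((Du i) (P j))^2))

/-- The total-variation norm `‖Du‖(Ω)`, as an infimum over representations. -/
def varNorm (Ω : Set (Eucl n)) (u : Eucl n → ℝ) : ℝ≥0∞ :=
  ⨅ (Du : Fin n → SignedMeasure (Eucl n)) (ν : Measure (Eucl n))
    (_ : IsDistGrad Ω u Du) (_ : IsVarMeasure Du ν), ν Ω

/-- `U` is a bounded open set with smooth boundary. -/
def SmoothBoundedOpen (U : Set (Eucl n)) : Prop :=
  IsOpen U ∧ Bornology.IsBounded U ∧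
    ∀ x ∈ frontier U, ∃ f : Eucl n → ℝ, ContDiff ℝ (⊤ : ℕ∞) f ∧ f x = 0 ∧
      fderiv ℝ f x ≠ 0 ∧ ∃ ε > 0, ∀ y ∈ Metric.ball x ε, (y ∈ U ↔ f y < 0)

/-- The value `μ(A)` of the signed measure `μ = μp - μn`. -/
def measVal (μp μn : Measure (Eucl n)) (A : Set (Eucl n)) : ℝ :=
  (μp A).toReal - (μn A).toReal

/-- The integral `∫ g dμ` against the signed measure `μ = μp - μn`. -/
def muInt (μp μn : Measure (Eucl n)) (g : Eucl n → ℝ) : ℝ :=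
  (∫ x, g x ∂μp) - ∫ x, g x ∂μn

/-- `ρ` is a measure on `Ω` which is locally finite in `Ω`. -/
def LocFinOn (Ω : Set (Eucl n)) (ρ : Measure (Eucl n)) : Prop :=
  ρ Ωᶜ = 0 ∧ ∀ x ∈ Ω, ∃ s ∈ 𝓝 x, ρ s ≠ ⊤

/-- `ustar` is the precise representative of `u` on `Ω` (defined `H^{n-1}`-a.e.). -/
def IsPreciseRepOn (Ω : Set (Eucl n)) (u ustar : Eucl n → ℝ) : Prop :=
  ∀ᵐ x ∂((μH[((n : ℝ) - 1)] : Measure (Eucl n)).restrict Ω),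
    Tendsto (fun r : ℝ =>
        (∫ y in Metric.ball x r ∩ Ω, u y) / (volume (Metric.ball x r ∩ Ω)).toReal)
      (𝓝[>] 0) (𝓝 (ustar x))

/-- `u ∈ BV_c^∞(Ω)` with gradient data `Du`, `ν`. -/
def IsBVcInf (Ω : Set (Eucl n)) (u : Eucl n → ℝ)
    (Du : Fin n → SignedMeasure (Eucl n)) (ν : Measure (Eucl n)) : Prop :=
  (∃ M, ∀ x, |u x| ≤ M) ∧ HasCompactSupport u ∧ tsupport u ⊆ Ω ∧ IntegrableOn u Ω ∧
    IsDistGrad Ω u Du ∧ IsVarMeasure Du ν ∧ ν Ω ≠ ⊤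

/-- The space `BV_{n/(n-1)}(ℝⁿ)`. -/
def BVnn1 (n : ℕ) : Set (Eucl n → ℝ) :=
  {u | AEStronglyMeasurable u volume ∧
    eLpNorm u ((n : ℝ≥0∞) / ((n : ℝ≥0∞) - 1)) volume ≠ ⊤ ∧
    ∃ Du ν, IsDistGrad Set.univ u Du ∧ IsVarMeasure Du ν ∧ ν Set.univ ≠ ⊤}

/-- The space `BV(ℝⁿ)`. -/
def BVfull (n : ℕ) : Set (Eucl n → ℝ) :=
  {u | Integrable u volume ∧
    ∃ Du ν, IsDistGrad Set.univ u Du ∧ IsVarMeasure Du ν ∧ ν Set.univ ≠ ⊤}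

/-- A functional on the function class `X` is linear. -/
def SubLinear (X : Set (Eucl n → ℝ)) (T : {u // u ∈ X} → ℝ) : Prop :=
  ∀ (u v w : {u // u ∈ X}) (a b : ℝ),
    (w : Eucl n → ℝ) = a • (u : Eucl n → ℝ) + b • (v : Eucl n → ℝ) →
      T w = a * T u + b * T v

/-- The operator norm of a functional on `X` w.r.t. the seminorm `p`. -/
def subDualNorm (X : Set (Eucl n → ℝ)) (p : (Eucl n → ℝ) → ℝ≥0∞)
    (T : {u // u ∈ X} → ℝ) : ℝ≥0∞ :=
  ⨆ u : {u // u ∈ X}, ENNReal.ofReal |T u| / p (u : Eucl n → ℝ)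


/-- A functional on distributions that is linear on test functions. -/
def TestLinear (T : (Eucl n → ℝ) → ℝ) : Prop :=
  ∀ (φ ψ : Eucl n → ℝ), IsTest Set.univ φ → IsTest Set.univ ψ → ∀ a b : ℝ,
    T (a • φ + b • ψ) = a * T φ + b * T ψ

/-- The dual norm of a distribution as a functional on `Ẇ^{1,1}(ℝⁿ)`,
computed on the dense class of test functions. -/
def distNormW11 (T : (Eucl n → ℝ) → ℝ) : ℝ≥0∞ :=
  ⨆ (φ : Eucl n → ℝ) (_ : IsTest Set.univ φ),
    ENNReal.ofReal |T φ| / ∫⁻ x, (‖gradient φ x‖₊ : ℝ≥0∞)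

/-- `T = div F` in the sense of distributions. -/
def IsDivOf (F : Eucl n → Eucl n) (T : (Eucl n → ℝ) → ℝ) : Prop :=
  ∀ φ : Eucl n → ℝ, IsTest Set.univ φ →
    T φ = - ∫ x, (inner ℝ (F x) (gradient φ x) : ℝ)

/-- `u` has zero trace on `∂Ω`. -/
def ZeroTrace (Ω : Set (Eucl n)) (u : Eucl n → ℝ) : Prop :=
  ∀ᵐ x ∂((μH[((n : ℝ) - 1)] : Measure (Eucl n)).restrict (frontier Ω)),
    Tendsto (fun r : ℝ => (∫ y in Metric.ball x r ∩ Ω, |u y|) / r ^ n)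
      (𝓝[>] 0) (𝓝 0)

/-- `Ω` has Lipschitz boundary: near each boundary point, after a rotation,
`Ω` is the open region above the graph of a Lipschitz function. -/
def LipschitzBoundary (Ω : Set (Eucl n)) : Prop :=
  ∀ x ∈ frontier Ω, ∃ r > (0 : ℝ), ∃ v : Eucl n, ‖v‖ = 1 ∧
    ∃ (g : Eucl n → ℝ) (L : ℝ≥0), LipschitzWith L g ∧
      Ω ∩ Metric.ball x r =
        {y ∈ Metric.ball x r | g (y - (inner ℝ y v : ℝ) • v) < (inner ℝ y v : ℝ)}

/-- The space `BV_0(Ω)` of `BV(Ω)` functions with zero trace. -/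
def BV0set (Ω : Set (Eucl n)) : Set (Eucl n → ℝ) :=
  {u | IntegrableOn u Ω ∧ ZeroTrace Ω u ∧
    ∃ Du ν, IsDistGrad Ω u Du ∧ IsVarMeasure Du ν ∧ ν Ω ≠ ⊤}

end BVPaper

open BVPaper

namespace S8

open MeasureTheory Topology Filter Set Metric
open scoped ENNReal NNReal RealInnerProductSpace

variable {N : ℕ}

lemma coord_le_norm (x : Eucl N) (i : Fin N) : |x i| ≤ ‖x‖ := by
  rw [EuclideanSpace.norm_eq]
  have h1 : |x i| = Real.sqrt (‖x i‖ ^ 2) := by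
    rw [Real.norm_eq_abs, sq_abs, Real.sqrt_sq_eq_abs]
  rw [h1]
  apply Real.sqrt_le_sqrt
  exact Finset.single_le_sum (f := fun j => ‖x j‖ ^ 2) (fun j _ => by positivity)
    (Finset.mem_univ i)

lemma smooth_ball (x : Eucl N) {r : ℝ} (hr : 0 < r) : SmoothBoundedOpen (ball x r) := by
  refine ⟨isOpen_ball, isBounded_ball, ?_⟩
  intro z hz
  rw [frontier_ball x hr.ne'] at hz
  have hzx : ‖z - x‖ = r := by
    rw [mem_sphere_iff_norm] at hz; exact hz
  refine ⟨fun y => ⟪y - x, y - x⟫ - r ^ 2, ?_, ?_, ?_, 1, one_pos, ?_⟩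
  · exact ((contDiff_id.sub contDiff_const).inner ℝ (contDiff_id.sub contDiff_const)).sub
      contDiff_const
  · show ⟪z - x, z - x⟫ - r ^ 2 = 0
    rw [real_inner_self_eq_norm_sq, hzx]; ring
  · intro h0
    have hdiff : DifferentiableAt ℝ (fun y : Eucl N => y - x) z :=
      differentiableAt_id.sub_const x
    have hsub : fderiv ℝ (fun y : Eucl N => ⟪y - x, y - x⟫ - r ^ 2) z
        = fderiv ℝ (fun y : Eucl N => ⟪y - x, y - x⟫) z := by
      exact fderiv_sub_const _
    have hval := fderiv_inner_apply (𝕜 := ℝ) hdiff hdiff (z - x)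
    have hderiv : fderiv ℝ (fun y : Eucl N => y - x) z = ContinuousLinearMap.id ℝ (Eucl N) := by
      rw [fderiv_sub_const, fderiv_id']
    rw [hderiv] at hval
    simp only [ContinuousLinearMap.id_apply] at hval
    have hin : ⟪z - x, z - x⟫ = r ^ 2 := by rw [real_inner_self_eq_norm_sq, hzx]
    rw [hin] at hval
    have h2 : (fderiv ℝ (fun y : Eucl N => ⟪y - x, y - x⟫ - r ^ 2) z) (z - x) = 0 := by
      rw [h0]; rfl
    rw [hsub, hval] at h2
    nlinarith
  · intro y _
    rw [mem_ball, dist_eq_norm]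
    show ‖y - x‖ < r ↔ ⟪y - x, y - x⟫ - r ^ 2 < 0
    rw [real_inner_self_eq_norm_sq]
    constructor
    · intro h
      have : ‖y - x‖ ^ 2 < r ^ 2 := by
        apply pow_lt_pow_left₀ h (norm_nonneg _) (by norm_num)
      linarith
    · intro h
      have h2 : ‖y - x‖ ^ 2 < r ^ 2 := by linarith
      exact lt_of_pow_lt_pow_left₀ 2 hr.le h2

lemma sphere_hm_le (d : ℝ) (hd : 0 ≤ d) (x : Eucl N) {ρ : ℝ} (hρ : 0 < ρ) :
    μH[d] (sphere x ρ) ≤ ENNReal.ofReal ρ ^ d * μH[d] (sphere (0 : Eucl N) 1) := by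
  set g : Eucl N → Eucl N := fun y => x + ρ • y with hg
  have hlip : LipschitzWith ρ.toNNReal g := by
    apply LipschitzWith.of_dist_le_mul
    intro y z
    rw [hg]
    simp only
    rw [dist_add_left, dist_smul₀, Real.norm_eq_abs, abs_of_pos hρ,
      Real.coe_toNNReal _ hρ.le]
  have himg : sphere x ρ ⊆ g '' sphere (0 : Eucl N) 1 := by
    intro u hu
    rw [mem_sphere_iff_norm] at hu
    refine ⟨ρ⁻¹ • (u - x), ?_, ?_⟩
    · rw [mem_sphere_iff_norm, sub_zero, norm_smul, Real.norm_eq_abs,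
        abs_of_pos (inv_pos.2 hρ), hu]
      field_simp
    · rw [hg]; simp only [smul_smul]
      rw [mul_inv_cancel₀ hρ.ne', one_smul]
      abel
  calc μH[d] (sphere x ρ) ≤ μH[d] (g '' sphere (0 : Eucl N) 1) := measure_mono himg
    _ ≤ (ρ.toNNReal : ℝ≥0∞) ^ d * μH[d] (sphere (0 : Eucl N) 1) :=
        hlip.hausdorffMeasure_image_le hd _
    _ = ENNReal.ofReal ρ ^ d * μH[d] (sphere (0 : Eucl N) 1) := rfl

lemma locfin_compact {Ω : Set (Eucl N)} (μ : Measure (Eucl N)) (h : LocFinOn Ω μ)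
    {K : Set (Eucl N)} (hK : IsCompact K) (hKΩ : K ⊆ Ω) : μ K ≠ ⊤ := by
  have h2 := h.2
  choose! s hs hsfin using h2
  obtain ⟨t, hcov⟩ := hK.elim_nhds_subcover' (fun x hx => s x)
    (fun x hx => hs x (hKΩ hx))
  have : μ K ≤ ∑ x ∈ t, μ (s x) := le_trans (measure_mono hcov) (measure_biUnion_finset_le _ _)
  intro htop
  rw [htop] at this
  have hfin : ∑ x ∈ t, μ (s ↑x) < ⊤ := ENNReal.sum_lt_top.2 fun x hx =>
    (hsfin x (hKΩ x.2)).lt_top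
  exact absurd (lt_of_le_of_lt this hfin) (lt_irrefl _)

lemma comparison (μ : Measure (Eucl N)) (D : Set (Eucl N)) (k θ d : ℝ) (hk : 0 ≤ k)
    (hθ : 0 < θ) (hd : 0 ≤ d)
    (hD : ∀ x ∈ D, ∀ r : ℝ, 0 < r → r < θ →
      μ (closedBall x r) ≤ ENNReal.ofReal k * ENNReal.ofReal r ^ d)
    (hH : μH[d] D = 0) : μ D = 0 := by
  set θ₀ := θ / 2 with hθ₀
  have hθ₀pos : 0 < θ₀ := by positivity
  have hθ₀lt : θ₀ < θ := by rw [hθ₀]; linarith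
  -- main claim
  have main : ∀ εr : ℝ, 0 < εr → μ D ≤ ENNReal.ofReal k * ENNReal.ofReal εr := by
    intro εr hεr
    rw [MeasureTheory.Measure.hausdorffMeasure_apply] at hH
    have h0 : (⨅ (t : ℕ → Set (Eucl N)) (_ : D ⊆ ⋃ n, t n)
        (_ : ∀ n, EMetric.diam (t n) ≤ ENNReal.ofReal θ₀),
        ∑' n, ⨆ _ : (t n).Nonempty, EMetric.diam (t n) ^ d) = 0 := by
      refine le_antisymm ?_ (zero_le)
      rw [← hH]
      exact le_iSup₂ (f := fun (r : ℝ≥0∞) (_ : 0 < r) =>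
        ⨅ (t : ℕ → Set (Eucl N)) (_ : D ⊆ ⋃ n, t n) (_ : ∀ n, EMetric.diam (t n) ≤ r),
          ∑' n, ⨆ _ : (t n).Nonempty, EMetric.diam (t n) ^ d)
        (ENNReal.ofReal θ₀) (ENNReal.ofReal_pos.2 hθ₀pos)
    have hlt : (⨅ (t : ℕ → Set (Eucl N)) (_ : D ⊆ ⋃ n, t n)
        (_ : ∀ n, EMetric.diam (t n) ≤ ENNReal.ofReal θ₀),
        ∑' n, ⨆ _ : (t n).Nonempty, EMetric.diam (t n) ^ d) < ENNReal.ofReal εr := by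
      rw [h0]; exact ENNReal.ofReal_pos.2 hεr
    simp only [iInf_lt_iff] at hlt
    obtain ⟨t, hcov, hdiam, hsum⟩ := hlt
    -- bound per piece
    have hper : ∀ n : ℕ, μ (t n ∩ D) ≤
        ENNReal.ofReal k * ⨆ _ : (t n).Nonempty, EMetric.diam (t n) ^ d := by
      intro n
      rcases (t n ∩ D).eq_empty_or_nonempty with he | ⟨x, hx⟩
      · rw [he, measure_empty]; exact zero_le
      have hne : (t n).Nonempty := ⟨x, hx.1⟩
      rw [iSup_pos hne]
      have hdu : EMetric.diam (t n ∩ D) ≤ EMetric.diam (t n) :=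
        EMetric.diam_mono inter_subset_left
      have hfin : EMetric.diam (t n ∩ D) ≠ ⊤ :=
        ((hdu.trans (hdiam n)).trans_lt ENNReal.ofReal_lt_top).ne
      set rr := (EMetric.diam (t n ∩ D)).toReal with hrr
      have hrr0 : 0 ≤ rr := ENNReal.toReal_nonneg
      have hsubB : ∀ ρ : ℝ, rr ≤ ρ → t n ∩ D ⊆ closedBall x ρ := by
        intro ρ hρ y hy
        rw [mem_closedBall, dist_edist]
        calc (edist y x).toReal ≤ rr :=
              ENNReal.toReal_mono hfin (EMetric.edist_le_diam_of_mem hy hx)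
          _ ≤ ρ := hρ
      have hrrθ : rr < θ := by
        have : rr ≤ θ₀ := by
          rw [hrr]
          calc (EMetric.diam (t n ∩ D)).toReal ≤ (ENNReal.ofReal θ₀).toReal :=
            ENNReal.toReal_mono ENNReal.ofReal_ne_top (hdu.trans (hdiam n))
          _ = θ₀ := ENNReal.toReal_ofReal hθ₀pos.le
        linarith
      rcases hrr0.eq_or_lt with hrr0' | hrrpos
      · -- diameter zero
        have hdiam0 : EMetric.diam (t n ∩ D) = 0 := by
          rw [← ENNReal.ofReal_toReal hfin, ← hrr, ← hrr0', ENNReal.ofReal_zero]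
        rcases hd.eq_or_lt with hd0 | hdpos
        · -- d = 0
          have h1 : μ (t n ∩ D) ≤ μ (closedBall x θ₀) :=
            measure_mono (hsubB θ₀ (by linarith))
          have h2 := hD x hx.2 θ₀ hθ₀pos hθ₀lt
          calc μ (t n ∩ D) ≤ ENNReal.ofReal k * ENNReal.ofReal θ₀ ^ d := h1.trans h2
            _ = ENNReal.ofReal k * EMetric.diam (t n) ^ d := by
              rw [← hd0, ENNReal.rpow_zero, ENNReal.rpow_zero]
        · -- d > 0 : μ (t n ∩ D) = 0
          have hzero : μ (t n ∩ D) = 0 := by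
            have hbound : ∀ i : ℕ, μ (t n ∩ D) ≤ ENNReal.ofReal (k * (θ₀ / (i + 1)) ^ d) := by
              intro i
              have hri : 0 < θ₀ / (i + 1 : ℝ) := by positivity
              have hriθ : θ₀ / (i + 1 : ℝ) < θ := by
                have : θ₀ / (i + 1 : ℝ) ≤ θ₀ := by
                  apply div_le_self hθ₀pos.le; push_cast; linarith [Nat.cast_nonneg (α := ℝ) i]
                linarith
              have h1 : μ (t n ∩ D) ≤ μ (closedBall x (θ₀ / (i + 1))) := by
                apply measure_mono (hsubB _ _)
                rw [← hrr0']; exact hri.le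
              have h2 := hD x hx.2 _ hri hriθ
              calc μ (t n ∩ D) ≤ ENNReal.ofReal k * ENNReal.ofReal (θ₀ / (i + 1)) ^ d :=
                    h1.trans h2
                _ = ENNReal.ofReal (k * (θ₀ / (i + 1)) ^ d) := by
                    rw [ENNReal.ofReal_rpow_of_nonneg hri.le hd, ← ENNReal.ofReal_mul hk]
            have htends : Tendsto (fun i : ℕ => ENNReal.ofReal (k * (θ₀ / (i + 1)) ^ d))
                atTop (𝓝 0) := by
              rw [show (0 : ℝ≥0∞) = ENNReal.ofReal (k * 0) by simp]
              apply ENNReal.tendsto_ofReal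
              apply Tendsto.const_mul
              have h1 : Tendsto (fun i : ℕ => θ₀ / (i + 1 : ℝ)) atTop (𝓝 0) := by
                have := tendsto_one_div_add_atTop_nhds_zero_nat (𝕜 := ℝ)
                have h2 := this.const_mul θ₀
                simpa [div_eq_mul_inv, mul_comm] using h2
              have h2 : ContinuousAt (fun s : ℝ => s ^ d) 0 :=
                Real.continuousAt_rpow_const 0 d (Or.inr hd)
              have h3 := h2.tendsto.comp h1
              rwa [Real.zero_rpow hdpos.ne'] at h3
            exact le_antisymm (ge_of_tendsto htends (Filter.Eventually.of_forall hbound))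
              (zero_le)
          rw [hzero]; exact zero_le
      · -- positive diameter
        have h1 : μ (t n ∩ D) ≤ μ (closedBall x rr) := measure_mono (hsubB rr le_rfl)
        have h2 := hD x hx.2 rr hrrpos hrrθ
        have h3 : ENNReal.ofReal rr = EMetric.diam (t n ∩ D) := ENNReal.ofReal_toReal hfin
        calc μ (t n ∩ D) ≤ ENNReal.ofReal k * ENNReal.ofReal rr ^ d := h1.trans h2
          _ = ENNReal.ofReal k * EMetric.diam (t n ∩ D) ^ d := by rw [h3]
          _ ≤ ENNReal.ofReal k * EMetric.diam (t n) ^ d :=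
              mul_le_mul_right (ENNReal.rpow_le_rpow hdu hd) _
    calc μ D ≤ μ (⋃ n, t n ∩ D) := by
          apply measure_mono
          intro y hy
          obtain ⟨_, ⟨n, rfl⟩, hyn⟩ := hcov hy
          exact mem_iUnion.2 ⟨n, hyn, hy⟩
      _ ≤ ∑' n, μ (t n ∩ D) := measure_iUnion_le _
      _ ≤ ∑' n, ENNReal.ofReal k * ⨆ _ : (t n).Nonempty, EMetric.diam (t n) ^ d :=
          ENNReal.tsum_le_tsum hper
      _ = ENNReal.ofReal k * ∑' n, ⨆ _ : (t n).Nonempty, EMetric.diam (t n) ^ d :=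
          ENNReal.tsum_mul_left
      _ ≤ ENNReal.ofReal k * ENNReal.ofReal εr := mul_le_mul_right hsum.le _
  -- conclude
  have htends : Tendsto (fun i : ℕ => ENNReal.ofReal k * ENNReal.ofReal (1 / (i + 1 : ℝ)))
      atTop (𝓝 0) := by
    rw [show (0 : ℝ≥0∞) = ENNReal.ofReal k * 0 by simp]
    apply ENNReal.Tendsto.const_mul
    · rw [show (0 : ℝ≥0∞) = ENNReal.ofReal 0 by simp]
      exact ENNReal.tendsto_ofReal tendsto_one_div_add_atTop_nhds_zero_nat
    · exact Or.inr ENNReal.ofReal_ne_top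
  refine le_antisymm ?_ (zero_le)
  refine ge_of_tendsto htends (Filter.Eventually.of_forall fun i => ?_)
  exact main _ (by positivity)

lemma boxFin (m : ℕ) (R : Set (Eucl m)) (hR : R ⊆ {y | ∀ j, |y j| ≤ 1}) :
    μH[(m : ℝ)] R ≠ ⊤ := by
  set f : Eucl m → (Fin m → ℝ) := ⇑(WithLp.equiv 2 (Fin m → ℝ)) with hf
  have hanti := PiLp.antilipschitzWith_ofLp 2 (fun _ : Fin m => ℝ)
  have h1 := hanti.le_hausdorffMeasure_image (d := (m : ℝ)) (Nat.cast_nonneg m) R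
  have h2 : f '' R ⊆ Set.pi Set.univ (fun _ : Fin m => Icc (-1 : ℝ) 1) := by
    rintro _ ⟨y, hy, rfl⟩
    intro j _
    have := hR hy j
    rw [hf]
    simp only [WithLp.equiv_apply]
    rw [mem_Icc]
    constructor <;> [linarith [abs_le.1 this]; exact (abs_le.1 this).2]
  have h3 : (μH[(m : ℝ)] : Measure (Fin m → ℝ)) = volume := by
    rw [show ((m : ℝ)) = ((Fintype.card (Fin m) : ℕ) : ℝ) by simp]
    exact MeasureTheory.hausdorffMeasure_pi_real
  have h4 : μH[(m : ℝ)] (f '' R) ≤ ENNReal.ofReal 2 ^ m := by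
    calc μH[(m : ℝ)] (f '' R) ≤ μH[(m : ℝ)] (Set.pi Set.univ fun _ : Fin m => Icc (-1 : ℝ) 1) :=
          measure_mono h2
      _ = volume (Set.pi Set.univ fun _ : Fin m => Icc (-1 : ℝ) 1) := by rw [h3]
      _ = ∏ _i : Fin m, volume (Icc (-1 : ℝ) 1) := volume_pi_pi _
      _ = ENNReal.ofReal 2 ^ m := by
          simp [Real.volume_Icc]; norm_num
  have : μH[(m : ℝ)] R < ⊤ := by
    apply lt_of_le_of_lt h1
    apply ENNReal.mul_lt_top
    · exact ENNReal.rpow_lt_top_of_nonneg (Nat.cast_nonneg m) ENNReal.coe_ne_top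
    · exact lt_of_le_of_lt h4 (ENNReal.pow_lt_top ENNReal.ofReal_lt_top)
  exact this.ne

def Jmap (m : ℕ) (i : Fin (m + 1)) (σ : ℝ) : Eucl m → Eucl (m + 1) := fun y =>
  (WithLp.equiv 2 (Fin (m + 1) → ℝ)).symm (i.insertNth σ (WithLp.equiv 2 (Fin m → ℝ) y))

lemma Jmap_isometry (m : ℕ) (i : Fin (m + 1)) (σ : ℝ) : Isometry (Jmap m i σ) := by
  apply Isometry.of_dist_eq
  intro y y'
  rw [EuclideanSpace.dist_eq, EuclideanSpace.dist_eq]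
  congr 1
  rw [Fin.sum_univ_succAbove (fun j => dist (Jmap m i σ y j) (Jmap m i σ y' j) ^ 2) i]
  simp only [Jmap, WithLp.equiv_symm_apply, WithLp.equiv_apply, PiLp.toLp_apply, Fin.insertNth_apply_same,
    Fin.insertNth_apply_succAbove]
  simp [dist_self]

lemma Jmap_face (m : ℕ) (i : Fin (m + 1)) (σ : ℝ) (x : Eucl (m + 1)) (hxi : x i = σ)
    (hx : ∀ j, |x j| ≤ 1) : x ∈ (Jmap m i σ) '' {y : Eucl m | ∀ j, |y j| ≤ 1} := by
  refine ⟨(WithLp.equiv 2 (Fin m → ℝ)).symm (fun l => x (i.succAbove l)), ?_, ?_⟩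
  · intro j
    simp only [WithLp.equiv_symm_apply, PiLp.toLp_apply, mem_setOf_eq]
    exact hx _
  · simp only [Jmap, Equiv.apply_symm_apply]
    rw [Equiv.symm_apply_eq]
    funext j
    rcases eq_or_ne j i with rfl | hj
    · rw [Fin.insertNth_apply_same]; exact hxi.symm
    · obtain ⟨l, rfl⟩ := Fin.exists_succAbove_eq hj
      rw [Fin.insertNth_apply_succAbove]
      rfl

lemma lipP : LipschitzOnWith 2 (fun x : Eucl N => ‖x‖⁻¹ • x) {x | 1 ≤ ‖x‖} := by
  apply LipschitzOnWith.of_dist_le_mul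
  intro x hx y hy
  simp only [mem_setOf_eq] at hx hy
  have ha : (0:ℝ) < ‖x‖ := lt_of_lt_of_le one_pos hx
  have hb : (0:ℝ) < ‖y‖ := lt_of_lt_of_le one_pos hy
  rw [dist_eq_norm, dist_eq_norm]
  have hid : ‖x‖⁻¹ • x - ‖y‖⁻¹ • y = ‖x‖⁻¹ • (x - y) + (‖x‖⁻¹ - ‖y‖⁻¹) • y := by
    rw [smul_sub, sub_smul]; abel
  rw [hid]
  have h1 : ‖‖x‖⁻¹ • (x - y)‖ = ‖x‖⁻¹ * ‖x - y‖ := by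
    rw [norm_smul, Real.norm_eq_abs, abs_of_pos (inv_pos.2 ha)]
  have h2 : ‖(‖x‖⁻¹ - ‖y‖⁻¹) • y‖ = |‖x‖⁻¹ - ‖y‖⁻¹| * ‖y‖ := by
    rw [norm_smul, Real.norm_eq_abs]
  have h3 : |‖x‖⁻¹ - ‖y‖⁻¹| * ‖y‖ = |‖y‖ - ‖x‖| / ‖x‖ := by
    have e1 : ‖x‖⁻¹ - ‖y‖⁻¹ = (‖y‖ - ‖x‖) / (‖x‖ * ‖y‖) := by field_simp
    rw [e1, abs_div, abs_of_pos (mul_pos ha hb)]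
    field_simp
  have h4 : |‖y‖ - ‖x‖| ≤ ‖x - y‖ := by
    rw [abs_sub_comm]
    exact abs_norm_sub_norm_le x y
  have h5 : ‖x‖⁻¹ ≤ 1 := by
    rw [inv_le_one_iff₀]; right; exact hx
  calc ‖‖x‖⁻¹ • (x - y) + (‖x‖⁻¹ - ‖y‖⁻¹) • y‖
      ≤ ‖‖x‖⁻¹ • (x - y)‖ + ‖(‖x‖⁻¹ - ‖y‖⁻¹) • y‖ := norm_add_le _ _
    _ = ‖x‖⁻¹ * ‖x - y‖ + |‖y‖ - ‖x‖| / ‖x‖ := by rw [h1, h2, h3]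
    _ ≤ (2:ℝ≥0) * ‖x - y‖ := by
        have hA : ‖x‖⁻¹ * ‖x - y‖ ≤ ‖x - y‖ :=
          mul_le_of_le_one_left (norm_nonneg _) h5
        have hB : |‖y‖ - ‖x‖| / ‖x‖ ≤ ‖x - y‖ :=
          le_trans (div_le_self (abs_nonneg _) hx) h4
        push_cast
        linarith

lemma sphere_cover (hN : 1 ≤ N) (u : Eucl N) (hu : ‖u‖ = 1) :
    ∃ x : Eucl N, (∃ i : Fin N, (x i = 1 ∨ x i = -1)) ∧ (∀ j, |x j| ≤ 1) ∧ 1 ≤ ‖x‖ ∧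
      ‖x‖⁻¹ • x = u := by
  have hne : (Finset.univ : Finset (Fin N)).Nonempty := by
    rw [Finset.univ_nonempty_iff]
    exact Fin.pos_iff_nonempty.1 hN
  obtain ⟨i, _, hmax⟩ := Finset.exists_max_image Finset.univ (fun j => |u j|) hne
  set a := |u i| with hadef
  have ha1 : a ≤ 1 := by rw [hadef, ← hu]; exact coord_le_norm u i
  have hapos : 0 < a := by
    rcases (abs_nonneg (u i)).eq_or_lt with h0 | h; swap
    · exact h
    exfalso
    have hzero : ∀ j, u j = 0 := by
      intro j
      have h' : |u j| ≤ |u i| := hmax j (Finset.mem_univ j)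
      rw [← h0] at h'
      exact abs_eq_zero.1 (le_antisymm h' (abs_nonneg _))
    have : ‖u‖ = 0 := by
      rw [EuclideanSpace.norm_eq]
      simp [hzero]
    rw [hu] at this; norm_num at this
  refine ⟨a⁻¹ • u, ⟨i, ?_⟩, ?_, ?_, ?_⟩
  · have hxi : (a⁻¹ • u) i = a⁻¹ * u i := rfl
    rcases abs_cases (u i) with ⟨h, _⟩ | ⟨h, _⟩
    · left
      have hui : u i = a := by rw [hadef, h]
      rw [hxi, hui, inv_mul_cancel₀ hapos.ne']
    · right
      have hui : u i = -a := by rw [hadef]; linarith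
      rw [hxi, hui, mul_neg, inv_mul_cancel₀ hapos.ne']
  · intro j
    have : (a⁻¹ • u) j = a⁻¹ * u j := rfl
    rw [this, abs_mul, abs_inv, abs_of_pos hapos]
    rw [inv_mul_le_iff₀ hapos, mul_one]
    exact hmax j (Finset.mem_univ j)
  · rw [norm_smul, Real.norm_eq_abs, abs_inv, abs_of_pos hapos, hu, mul_one]
    rw [le_inv_comm₀ one_pos hapos, inv_one]
    exact ha1
  · rw [norm_smul, Real.norm_eq_abs, abs_inv, abs_of_pos hapos, hu, mul_one, inv_inv,
      smul_smul, mul_inv_cancel₀ hapos.ne', one_smul]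

lemma sphere_hm_ne_top (hN : 1 ≤ N) : μH[(N : ℝ) - 1] (sphere (0 : Eucl N) 1) ≠ ⊤ := by
  obtain ⟨m, rfl⟩ : ∃ m, N = m + 1 := ⟨N - 1, by omega⟩
  have hcast : ((m + 1 : ℕ) : ℝ) - 1 = (m : ℝ) := by push_cast; ring
  rw [hcast]
  set F : Fin (m + 1) → ℝ → Set (Eucl (m + 1)) :=
    fun i σ => {x | x i = σ ∧ ∀ j, |x j| ≤ 1} with hF
  have hm0 : (0:ℝ) ≤ (m:ℝ) := Nat.cast_nonneg m
  have hFfin : ∀ (i : Fin (m + 1)) (σ : ℝ), μH[(m : ℝ)] (F i σ) < ⊤ := by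
    intro i σ
    have h1 : F i σ ⊆ (Jmap m i σ) '' {y : Eucl m | ∀ j, |y j| ≤ 1} := by
      rintro x ⟨hxi, hx⟩
      exact Jmap_face m i σ x hxi hx
    calc μH[(m : ℝ)] (F i σ) ≤ μH[(m : ℝ)] ((Jmap m i σ) '' {y : Eucl m | ∀ j, |y j| ≤ 1}) :=
          measure_mono h1
      _ = μH[(m : ℝ)] {y : Eucl m | ∀ j, |y j| ≤ 1} :=
          (Jmap_isometry m i σ).hausdorffMeasure_image (Or.inl hm0) _
      _ < ⊤ := (boxFin m _ (subset_refl _)).lt_top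
  set S : Set (Eucl (m + 1)) := ⋃ i, F i 1 ∪ F i (-1) with hSdef
  have hST : S ⊆ {x : Eucl (m + 1) | 1 ≤ ‖x‖} := by
    intro x hx
    simp only [hSdef, mem_iUnion, mem_union] at hx
    obtain ⟨i, hx | hx⟩ := hx <;>
    · have h1 := coord_le_norm x i
      rw [hx.1] at h1
      simp only [mem_setOf_eq]
      first
        | exact le_trans (by norm_num) h1
        | (rw [abs_neg, abs_one] at h1; exact h1)
  have hcov : sphere (0 : Eucl (m + 1)) 1 ⊆ (fun x : Eucl (m+1) => ‖x‖⁻¹ • x) '' S := by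
    intro u hu
    rw [mem_sphere_iff_norm, sub_zero] at hu
    obtain ⟨x, ⟨i, hi⟩, hb, hn, hPx⟩ := sphere_cover hN u hu
    refine ⟨x, ?_, hPx⟩
    simp only [hSdef, mem_iUnion, mem_union]
    exact ⟨i, hi.imp (fun h => ⟨h, hb⟩) (fun h => ⟨h, hb⟩)⟩
  have hlip : LipschitzOnWith 2 (fun x : Eucl (m+1) => ‖x‖⁻¹ • x) S := lipP.mono hST
  have hSfin : μH[(m : ℝ)] S < ⊤ := by
    calc μH[(m : ℝ)] S ≤ ∑' i : Fin (m+1), μH[(m : ℝ)] (F i 1 ∪ F i (-1)) :=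
          measure_iUnion_le _
      _ = ∑ i : Fin (m+1), μH[(m : ℝ)] (F i 1 ∪ F i (-1)) := tsum_fintype _
      _ < ⊤ := by
          apply ENNReal.sum_lt_top.2
          intro i _
          exact lt_of_le_of_lt (measure_union_le _ _)
            (ENNReal.add_lt_top.2 ⟨hFfin i 1, hFfin i (-1)⟩)
  have hfinal : μH[(m : ℝ)] (sphere (0 : Eucl (m + 1)) 1) < ⊤ := by
    calc μH[(m : ℝ)] (sphere (0 : Eucl (m + 1)) 1)
        ≤ μH[(m : ℝ)] ((fun x : Eucl (m+1) => ‖x‖⁻¹ • x) '' S) := measure_mono hcov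
      _ ≤ (2 : ℝ≥0∞) ^ (m : ℝ) * μH[(m : ℝ)] S := by
          have := hlip.hausdorffMeasure_image_le hm0
          simpa using this
      _ < ⊤ := ENNReal.mul_lt_top
          (ENNReal.rpow_lt_top_of_nonneg hm0 (by norm_num)) hSfin
  exact hfinal.ne

lemma key (hN : 1 ≤ N) (Ω : Set (Eucl N)) (hΩ : IsOpen Ω)
    (μp μn : Measure (Eucl N)) (hsing : μp.MutuallySingular μn)
    (hlfp : LocFinOn Ω μp) (hlfn : LocFinOn Ω μn) (C : ℝ)
    (hsm : ∀ U : Set (Eucl N), SmoothBoundedOpen U → closure U ⊆ Ω →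
      ENNReal.ofReal |measVal μp μn U| ≤
        ENNReal.ofReal C * μH[((N : ℝ) - 1)] (frontier U)) :
    ∀ A : Set (Eucl N), A ⊆ Ω → MeasurableSet A → μH[((N : ℝ) - 1)] A = 0 → μp A = 0 := by
  intro A hAΩ hAm hA0
  have hd : (0:ℝ) ≤ (N : ℝ) - 1 := by
    have : (1:ℝ) ≤ (N:ℝ) := by exact_mod_cast hN
    linarith
  haveI : Nontrivial (Eucl N) := by
    refine ⟨EuclideanSpace.single (⟨0, hN⟩ : Fin N) (1:ℝ), 0, fun h0 => ?_⟩
    have := congrArg (fun v : Eucl N => v (⟨0, hN⟩ : Fin N)) h0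
    simp at this
  -- exhaustion
  set Km : ℕ → Set (Eucl N) := fun m =>
    closedBall 0 m ∩ {x | ∀ y ∈ Ωᶜ, 1/(m+1:ℝ) ≤ dist x y} with hKm
  have hKmclosed : ∀ m, IsClosed (Km m) := by
    intro m
    apply IsClosed.inter Metric.isClosed_closedBall
    have : {x : Eucl N | ∀ y ∈ Ωᶜ, 1/(m+1:ℝ) ≤ dist x y} =
        ⋂ y ∈ Ωᶜ, {x | 1/(m+1:ℝ) ≤ dist x y} := by
      ext z; simp
    rw [this]
    exact isClosed_biInter fun y _ =>
      isClosed_le continuous_const (continuous_id.dist continuous_const)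
  have hKmcomp : ∀ m, IsCompact (Km m) := fun m =>
    (Metric.isCompact_of_isClosed_isBounded (hKmclosed m)
      (isBounded_closedBall.subset inter_subset_left))
  have hKmΩ : ∀ m, Km m ⊆ Ω := by
    intro m x hx
    by_contra hxo
    have := hx.2 x hxo
    simp at this
    have : (0:ℝ) < 1/(m+1:ℝ) := by positivity
    linarith [hx.2 x hxo, dist_self x]
  have hAcover : A ⊆ ⋃ m, A ∩ Km m := by
    intro x hx
    obtain ⟨m1, hm1⟩ := exists_nat_ge ‖x‖
    have hΩx : ∃ ε : ℝ, 0 < ε ∧ ∀ y ∈ Ωᶜ, ε ≤ dist x y := by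
      obtain ⟨ε, hε, hb⟩ := Metric.mem_nhds_iff.1 (hΩ.mem_nhds (hAΩ hx))
      refine ⟨ε/2, by positivity, fun y hy => ?_⟩
      by_contra hlt
      push_neg at hlt
      exact hy (hb (mem_ball'.2 (lt_of_lt_of_le hlt (by linarith))))
    obtain ⟨ε, hε, hεb⟩ := hΩx
    obtain ⟨m2, hm2⟩ := exists_nat_one_div_lt hε
    refine mem_iUnion.2 ⟨max m1 m2, hx, ?_, ?_⟩
    · rw [mem_closedBall, dist_zero_right]
      exact le_trans hm1 (by exact_mod_cast le_max_left m1 m2)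
    · intro y hy
      refine le_trans ?_ (hεb y hy)
      refine le_trans ?_ hm2.le
      apply one_div_le_one_div_of_le (by positivity)
      have : (m2:ℝ) ≤ ((max m1 m2 : ℕ):ℝ) := by exact_mod_cast le_max_right m1 m2
      linarith
  suffices hm : ∀ m, μp (A ∩ Km m) = 0 by
    refine le_antisymm ?_ (zero_le)
    calc μp A ≤ μp (⋃ m, A ∩ Km m) := measure_mono hAcover
      _ ≤ ∑' m, μp (A ∩ Km m) := measure_iUnion_le _
      _ = 0 := by simp [hm]
  intro m
  -- compact neighborhood setup
  obtain ⟨δ0, hδ0, hδΩ⟩ := (hKmcomp m).exists_cthickening_subset_open hΩ (hKmΩ m)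
  set K' := cthickening δ0 (Km m) with hK'
  have hK'c : IsCompact K' := (hKmcomp m).cthickening
  have hK'meas : MeasurableSet K' := isClosed_cthickening.measurableSet
  have hfinp : μp K' ≠ ⊤ := locfin_compact μp hlfp hK'c hδΩ
  have hfinn : μn K' ≠ ⊤ := locfin_compact μn hlfn hK'c hδΩ
  obtain ⟨s, hsmeas, hps, hns⟩ := hsing
  set B := A ∩ Km m ∩ sᶜ with hB
  have hBK : B ⊆ Km m := fun x hx => hx.1.2
  have hBA : B ⊆ A := fun x hx => hx.1.1
  have hBs : B ⊆ sᶜ := fun x hx => hx.2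
  have hBK' : B ⊆ K' := fun x hx => self_subset_cthickening _ (hBK hx)
  have hsplit : μp (A ∩ Km m) ≤ μp B := by
    have hsub : A ∩ Km m ⊆ B ∪ s := by
      intro x hx
      by_cases hxs : x ∈ s
      · exact Or.inr hxs
      · exact Or.inl ⟨hx, hxs⟩
    calc μp (A ∩ Km m) ≤ μp (B ∪ s) := measure_mono hsub
      _ ≤ μp B + μp s := measure_union_le _ _
      _ = μp B := by rw [hps, add_zero]
  -- constants
  set H1 := μH[(N : ℝ) - 1] (sphere (0:Eucl N) 1) with hH1def
  have hH1 : H1 ≠ ⊤ := sphere_hm_ne_top hN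
  set c1 : ℝ≥0∞ := ENNReal.ofReal C * ENNReal.ofReal 2 ^ ((N : ℝ) - 1) * H1 with hc1def
  have hc1 : c1 ≠ ⊤ := by
    apply ENNReal.mul_ne_top (ENNReal.mul_ne_top ENNReal.ofReal_ne_top ?_) hH1
    exact (ENNReal.rpow_lt_top_of_nonneg hd ENNReal.ofReal_ne_top).ne
  set k : ℝ := 2 * c1.toReal + 1 with hkdef
  have hk0 : (0:ℝ) < k := by positivity
  have hkc : 2 * c1 ≤ ENNReal.ofReal k := by
    have h1 : (2:ℝ≥0∞) * c1 = ENNReal.ofReal (2 * c1.toReal) := by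
      rw [ENNReal.ofReal_mul (by norm_num), ENNReal.ofReal_toReal hc1]
      norm_num
    rw [h1]
    exact ENNReal.ofReal_le_ofReal (by linarith)
  -- per-ball estimate
  have hball : ∀ x ∈ Km m, ∀ r : ℝ, 0 < r → r < δ0/2 →
      μp (closedBall x r) ≤ μn (closedBall x r) + c1 * ENNReal.ofReal r ^ ((N : ℝ) - 1) := by
    intro x hx r hr hrδ
    set ρ : ℕ → ℝ := fun i => r + r/(i+1) with hρdef
    have hρr : ∀ i, r < ρ i := by
      intro i
      have : (0:ℝ) < r/(i+1) := by positivity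
      simp only [hρdef]; linarith
    have hρ2 : ∀ i, ρ i ≤ 2*r := by
      intro i
      have : r/(i+1:ℝ) ≤ r := by
        apply div_le_self hr.le
        have : (0:ℝ) ≤ (i:ℝ) := Nat.cast_nonneg i
        linarith
      simp only [hρdef]; linarith
    have hρδ : ∀ i, ρ i < δ0 := fun i => lt_of_le_of_lt (hρ2 i) (by linarith)
    have hρpos : ∀ i, 0 < ρ i := fun i => lt_trans hr (hρr i)
    have hsubK' : ∀ i, ball x (ρ i) ⊆ K' := by
      intro i
      refine subset_trans ball_subset_closedBall (subset_trans
        (closedBall_subset_closedBall (hρδ i).le) (closedBall_subset_cthickening hx δ0))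
    have hest : ∀ i, μp (ball x (ρ i)) ≤ μn (ball x (ρ i)) +
        c1 * ENNReal.ofReal r ^ ((N : ℝ) - 1) := by
      intro i
      have hcl : closure (ball x (ρ i)) ⊆ Ω := by
        rw [closure_ball x (hρpos i).ne']
        exact subset_trans (subset_trans (closedBall_subset_closedBall (hρδ i).le)
          (closedBall_subset_cthickening hx δ0)) hδΩ
      have happ := hsm _ (smooth_ball x (hρpos i)) hcl
      rw [frontier_ball x (hρpos i).ne'] at happ
      have hpU : μp (ball x (ρ i)) ≠ ⊤ :=
        fun ht => hfinp (top_le_iff.1 (ht ▸ measure_mono (hsubK' i)))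
      have hnU : μn (ball x (ρ i)) ≠ ⊤ :=
        fun ht => hfinn (top_le_iff.1 (ht ▸ measure_mono (hsubK' i)))
      set a := (μp (ball x (ρ i))).toReal with ha
      set b := (μn (ball x (ρ i))).toReal with hb2
      have hab : a ≤ b + |a - b| := by
        have := le_abs_self (a - b); linarith
      have hsph : ENNReal.ofReal C * μH[(N : ℝ) - 1] (sphere x (ρ i)) ≤
          c1 * ENNReal.ofReal r ^ ((N : ℝ) - 1) := by
        calc ENNReal.ofReal C * μH[(N : ℝ) - 1] (sphere x (ρ i))
            ≤ ENNReal.ofReal C * (ENNReal.ofReal (ρ i) ^ ((N : ℝ) - 1) * H1) :=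
              mul_le_mul_right (sphere_hm_le _ hd x (hρpos i)) _
          _ ≤ ENNReal.ofReal C * (ENNReal.ofReal (2*r) ^ ((N : ℝ) - 1) * H1) := by
              apply mul_le_mul_right
              apply mul_le_mul_left
              exact ENNReal.rpow_le_rpow (ENNReal.ofReal_le_ofReal (hρ2 i)) hd
          _ = c1 * ENNReal.ofReal r ^ ((N : ℝ) - 1) := by
              rw [hc1def, ENNReal.ofReal_mul (by norm_num),
                ENNReal.mul_rpow_of_nonneg _ _ hd]
              ring
      calc μp (ball x (ρ i)) = ENNReal.ofReal a := (ENNReal.ofReal_toReal hpU).symm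
        _ ≤ ENNReal.ofReal (b + |a - b|) := ENNReal.ofReal_le_ofReal hab
        _ ≤ ENNReal.ofReal b + ENNReal.ofReal |a - b| := ENNReal.ofReal_add_le
        _ ≤ μn (ball x (ρ i)) + c1 * ENNReal.ofReal r ^ ((N : ℝ) - 1) := by
            apply add_le_add
            · rw [hb2, ENNReal.ofReal_toReal hnU]
            · exact le_trans happ hsph
    have hmono : Antitone (fun i : ℕ => ball x (ρ i)) := by
      intro i j hij
      apply ball_subset_ball
      simp only [hρdef]
      have h1 : (i:ℝ) + 1 ≤ (j:ℝ) + 1 := by exact_mod_cast Nat.add_le_add_right hij 1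
      have := div_le_div_of_nonneg_left hr.le (by positivity : (0:ℝ) < (i:ℝ)+1) h1
      linarith [div_le_div_of_nonneg_left hr.le
        (by positivity : (0:ℝ) < (i:ℝ)+1) h1]
    have hiInter : ⋂ i, ball x (ρ i) = closedBall x r := by
      ext y
      simp only [mem_iInter, mem_ball, mem_closedBall]
      constructor
      · intro h
        have htd : Tendsto ρ atTop (𝓝 r) := by
          have h1 : Tendsto (fun i : ℕ => r * (1/(i+1:ℝ))) atTop (𝓝 (r * 0)) :=
            Tendsto.const_mul r tendsto_one_div_add_atTop_nhds_zero_nat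
          have : ρ = fun i : ℕ => r + r * (1/(i+1:ℝ)) := by
            funext i; simp only [hρdef]; ring
          have h2 : Tendsto (fun i : ℕ => r + r * (1/(i+1:ℝ))) atTop (𝓝 (r + r*0)) :=
            tendsto_const_nhds.add h1
          rw [this]
          simpa using h2
        exact ge_of_tendsto htd (Eventually.of_forall fun i => (h i).le)
      · exact fun h i => lt_of_le_of_lt h (hρr i)
    have htm : Tendsto (fun i => μn (ball x (ρ i))) atTop (𝓝 (μn (closedBall x r))) := by
      have := tendsto_measure_iInter_atTop (μ := μn)
        (fun i => measurableSet_ball.nullMeasurableSet) hmono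
        ⟨0, fun ht => hfinn (top_le_iff.1 (ht ▸ measure_mono (hsubK' 0)))⟩
      rwa [hiInter] at this
    have htm2 : Tendsto (fun i => μn (ball x (ρ i)) + c1 * ENNReal.ofReal r ^ ((N : ℝ) - 1))
        atTop (𝓝 (μn (closedBall x r) + c1 * ENNReal.ofReal r ^ ((N : ℝ) - 1))) :=
      htm.add tendsto_const_nhds
    refine ge_of_tendsto htm2 (Eventually.of_forall fun i => ?_)
    exact le_trans (measure_mono (closedBall_subset_ball (hρr i))) (hest i)
  -- split into low-density and high-density parts
  set P : Eucl N → Prop := fun x => ∀ δ : ℝ, 0 < δ → ∃ r,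
    0 < r ∧ r < δ ∧ ENNReal.ofReal k * ENNReal.ofReal r ^ ((N : ℝ) - 1) ≤
      μp (closedBall x r) with hPdef
  set Sk := {x ∈ B | P x} with hSkdef
  set Dm : ℕ → Set (Eucl N) := fun j => {x ∈ B | ∀ r : ℝ, 0 < r → r < 1/(j+1:ℝ) →
    μp (closedBall x r) ≤ ENNReal.ofReal k * ENNReal.ofReal r ^ ((N : ℝ) - 1)} with hDmdef
  have hBcover : B ⊆ Sk ∪ ⋃ j, Dm j := by
    intro x hxB
    by_cases hPx : P x
    · exact Or.inl ⟨hxB, hPx⟩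
    · right
      have hPx' : ¬ (∀ δ : ℝ, 0 < δ → ∃ r,
          0 < r ∧ r < δ ∧ ENNReal.ofReal k * ENNReal.ofReal r ^ ((N : ℝ) - 1) ≤
            μp (closedBall x r)) := hPx
      push_neg at hPx'
      obtain ⟨δ, hδ, hall⟩ := hPx'
      obtain ⟨j, hj⟩ := exists_nat_one_div_lt hδ
      refine mem_iUnion.2 ⟨j, hxB, fun r hr hrj => ?_⟩
      exact (hall r hr (lt_trans hrj hj)).le
  have hDm0 : ∀ j, μp (Dm j) = 0 := by
    intro j
    apply comparison μp (Dm j) k (1/(j+1:ℝ)) _ hk0.le (by positivity) hd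
    · intro x hx r h1 h2
      exact hx.2 r h1 h2
    · refine le_antisymm ?_ (zero_le)
      rw [← hA0]
      exact measure_mono fun x hx => hBA hx.1
  have hSk0 : μp Sk = 0 := by
    have hSkB : Sk ⊆ B := fun x hx => hx.1
    have hSkfin : μp Sk ≠ ⊤ :=
      fun ht => hfinp (top_le_iff.1 (ht ▸ measure_mono (hSkB.trans hBK')))
    have hbound : ∀ ε : ℝ≥0∞, 0 < ε → μp Sk ≤ 2 * ε := by
      intro ε hε
      haveI hfm1 : IsFiniteMeasure (μn.restrict K') :=
        ⟨by rw [Measure.restrict_apply_univ]; exact hfinn.lt_top⟩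
      haveI hfm2 : IsFiniteMeasure (μp.restrict K') :=
        ⟨by rw [Measure.restrict_apply_univ]; exact hfinp.lt_top⟩
      have hSkn : (μn.restrict K') Sk < ε := by
        rw [Measure.restrict_apply' hK'meas]
        have h1 : μn (Sk ∩ K') ≤ μn sᶜ :=
          measure_mono fun x hx => hBs (hSkB hx.1)
        rw [hns] at h1
        exact lt_of_le_of_lt (le_antisymm h1 (zero_le)).le hε
      obtain ⟨V, hVSk, hVopen, hVε⟩ := Set.exists_isOpen_lt_of_lt Sk ε hSkn
      set V' := V ∩ thickening δ0 (Km m) with hV'def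
      have hV'open : IsOpen V' := hVopen.inter isOpen_thickening
      have hSkV' : Sk ⊆ V' := fun x hx =>
        ⟨hVSk hx, self_subset_thickening hδ0 _ (hBK (hSkB hx))⟩
      have hV'K' : V' ⊆ K' :=
        inter_subset_right.trans (thickening_subset_cthickening _ _)
      have hV'V : V' ⊆ V := inter_subset_left
      have hV'ne : V'ᶜ.Nonempty := by
        haveI : NoncompactSpace (Eucl N) := NormedSpace.noncompactSpace ℝ (Eucl N)
        obtain ⟨z, hz⟩ := (ne_univ_iff_exists_notMem K').1 hK'c.ne_univ
        exact ⟨z, fun hzv => hz (hV'K' hzv)⟩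
      set R : Eucl N → ℝ := fun x => min (δ0/2) (Metric.infDist x V'ᶜ) with hRdef
      have hRpos : ∀ x ∈ Sk, 0 < R x := by
        intro x hx
        apply lt_min (by positivity)
        rw [← IsClosed.notMem_iff_infDist_pos hV'open.isClosed_compl hV'ne]
        simp only [mem_compl_iff, not_not]
        exact hSkV' hx
      set f : Eucl N → Set ℝ := fun x =>
        {r | ENNReal.ofReal k * ENNReal.ofReal r ^ ((N : ℝ) - 1) ≤ μp (closedBall x r)}
        with hfdef
      have hf : ∀ x ∈ Sk, ∀ δ > 0, (f x ∩ Ioo 0 δ).Nonempty := by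
        intro x hx δ hδ
        obtain ⟨r, h1, h2, h3⟩ := hx.2 δ hδ
        exact ⟨r, h3, h1, h2⟩
      obtain ⟨t, rad, htc, hts, hrad, hresid, hdisj⟩ :=
        Besicovitch.exists_disjoint_closedBall_covering_ae (μp.restrict K') f Sk hf R hRpos
      have hbprop : ∀ x ∈ t, closedBall x (rad x) ⊆ V' ∧ closedBall x (rad x) ⊆ K' := by
        intro x hxt
        obtain ⟨hf1, hf2, hf3⟩ := hrad x hxt
        have hsubV' : closedBall x (rad x) ⊆ V' := by
          intro y hy
          by_contra hyV
          have h1 : Metric.infDist x V'ᶜ ≤ dist x y :=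
            Metric.infDist_le_dist_of_mem hyV
          rw [mem_closedBall] at hy
          have h2 : rad x < Metric.infDist x V'ᶜ :=
            lt_of_lt_of_le hf3 (min_le_right _ _)
          rw [dist_comm] at h1
          linarith
        refine ⟨hsubV', ?_⟩
        have h3 : rad x ≤ δ0 := le_trans hf3.le (le_trans (min_le_left _ _) (by linarith))
        exact (closedBall_subset_closedBall h3).trans
          (closedBall_subset_cthickening (hBK (hSkB (hts hxt))) δ0)
      -- sums
      have hmeas : ∀ x ∈ t, MeasurableSet (closedBall x (rad x)) :=
        fun x _ => measurableSet_closedBall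
      have hSn : ∑' x : t, μn (closedBall (x:Eucl N) (rad x)) ≤ ε := by
        have h1 : ∀ x : t, μn (closedBall (x:Eucl N) (rad x)) =
            (μn.restrict K') (closedBall (x:Eucl N) (rad x)) := by
          intro x
          rw [Measure.restrict_apply' hK'meas,
            inter_eq_self_of_subset_left (hbprop x x.2).2]
        calc ∑' x : t, μn (closedBall (x:Eucl N) (rad x))
            = ∑' x : t, (μn.restrict K') (closedBall (x:Eucl N) (rad x)) := by
              exact tsum_congr h1
          _ = (μn.restrict K') (⋃ x ∈ t, closedBall x (rad x)) :=
              (measure_biUnion htc hdisj hmeas).symm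
          _ ≤ (μn.restrict K') V := by
              apply measure_mono
              refine iUnion₂_subset fun x hxt => ((hbprop x hxt).1).trans hV'V
          _ ≤ ε := hVε.le
      have hSp_eq : ∑' x : t, μp (closedBall (x:Eucl N) (rad x)) =
          (μp.restrict K') (⋃ x ∈ t, closedBall x (rad x)) := by
        have h1 : ∀ x : t, μp (closedBall (x:Eucl N) (rad x)) =
            (μp.restrict K') (closedBall (x:Eucl N) (rad x)) := by
          intro x
          rw [Measure.restrict_apply' hK'meas,
            inter_eq_self_of_subset_left (hbprop x x.2).2]
        rw [tsum_congr h1]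
        exact (measure_biUnion htc hdisj hmeas).symm
      have hSpfin : ∑' x : t, μp (closedBall (x:Eucl N) (rad x)) ≠ ⊤ := by
        rw [hSp_eq]
        intro ht2
        apply hfinp
        have := measure_mono (μ := μp.restrict K') (subset_univ (⋃ x ∈ t, closedBall x (rad x)))
        rw [ht2, Measure.restrict_apply_univ] at this
        exact top_le_iff.1 this
      have hper : ∀ x : t, μp (closedBall (x:Eucl N) (rad x)) ≤
          μn (closedBall (x:Eucl N) (rad x)) +
            μp (closedBall (x:Eucl N) (rad x)) / 2 := by
        intro x
        obtain ⟨hf1, hf2, hf3⟩ := hrad x x.2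
        have hx1 : (x:Eucl N) ∈ Km m := hBK (hSkB (hts x.2))
        have hr2 : rad x < δ0/2 := lt_of_lt_of_le hf3 (min_le_left _ _)
        have h1 := hball (x:Eucl N) hx1 (rad x) hf2 hr2
        have h2 : c1 * ENNReal.ofReal (rad x) ^ ((N : ℝ) - 1) ≤
            μp (closedBall (x:Eucl N) (rad x)) / 2 := by
          rw [ENNReal.le_div_iff_mul_le (Or.inl two_ne_zero) (Or.inl ENNReal.ofNat_ne_top)]
          calc c1 * ENNReal.ofReal (rad x) ^ ((N : ℝ) - 1) * 2
              = (2 * c1) * ENNReal.ofReal (rad x) ^ ((N : ℝ) - 1) := by ring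
            _ ≤ ENNReal.ofReal k * ENNReal.ofReal (rad x) ^ ((N : ℝ) - 1) :=
                mul_le_mul_left hkc _
            _ ≤ μp (closedBall (x:Eucl N) (rad x)) := hf1
        exact le_trans h1 (add_le_add le_rfl h2)
      have hsum : ∑' x : t, μp (closedBall (x:Eucl N) (rad x)) ≤
          ε + (∑' x : t, μp (closedBall (x:Eucl N) (rad x))) / 2 := by
        calc ∑' x : t, μp (closedBall (x:Eucl N) (rad x))
            ≤ ∑' x : t, (μn (closedBall (x:Eucl N) (rad x)) +
                μp (closedBall (x:Eucl N) (rad x)) / 2) := ENNReal.tsum_le_tsum hper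
          _ = (∑' x : t, μn (closedBall (x:Eucl N) (rad x))) +
              ∑' x : t, μp (closedBall (x:Eucl N) (rad x)) / 2 := ENNReal.tsum_add
          _ ≤ ε + (∑' x : t, μp (closedBall (x:Eucl N) (rad x))) / 2 := by
              apply add_le_add hSn
              simp only [div_eq_mul_inv]
              rw [ENNReal.tsum_mul_right]
      have hhalf : (∑' x : t, μp (closedBall (x:Eucl N) (rad x))) / 2 ≤ ε := by
        have h2 : (∑' x : t, μp (closedBall (x:Eucl N) (rad x))) -
            (∑' x : t, μp (closedBall (x:Eucl N) (rad x))) / 2 ≤ ε :=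
          tsub_le_iff_right.2 hsum
        rwa [ENNReal.sub_half hSpfin] at h2
      have hSp2ε : ∑' x : t, μp (closedBall (x:Eucl N) (rad x)) ≤ 2 * ε := by
        rw [← ENNReal.add_halves (∑' x : t, μp (closedBall (x:Eucl N) (rad x))), two_mul]
        exact add_le_add hhalf hhalf
      -- conclude
      have hresid' : μp (Sk \ ⋃ x ∈ t, closedBall x (rad x)) = 0 := by
        have hsub : Sk \ ⋃ x ∈ t, closedBall x (rad x) ⊆ K' := fun x hx =>
          hBK' (hSkB hx.1)
        rw [show μp (Sk \ ⋃ x ∈ t, closedBall x (rad x)) =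
            (μp.restrict K') (Sk \ ⋃ x ∈ t, closedBall x (rad x)) by
          rw [Measure.restrict_apply' hK'meas, inter_eq_self_of_subset_left hsub]]
        exact hresid
      calc μp Sk ≤ μp ((Sk \ ⋃ x ∈ t, closedBall x (rad x)) ∪ ⋃ x ∈ t, closedBall x (rad x)) :=
            measure_mono (fun x hx => by
              by_cases hxu : x ∈ ⋃ x ∈ t, closedBall x (rad x)
              · exact Or.inr hxu
              · exact Or.inl ⟨hx, hxu⟩)
        _ ≤ μp (Sk \ ⋃ x ∈ t, closedBall x (rad x)) + μp (⋃ x ∈ t, closedBall x (rad x)) :=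
            measure_union_le _ _
        _ ≤ 0 + ∑' x : t, μp (closedBall (x:Eucl N) (rad x)) := by
            apply add_le_add hresid'.le
            exact measure_biUnion_le μp htc _
        _ ≤ 2 * ε := by rw [zero_add]; exact hSp2ε
    -- from hbound to zero
    refine le_antisymm ?_ (zero_le)
    refine ENNReal.le_of_forall_pos_le_add fun ε' hε' _ => ?_
    rw [zero_add]
    have h4 := hbound ((ε' : ℝ≥0∞) / 2) (by
      apply ENNReal.div_pos (by exact_mod_cast hε'.ne') (by norm_num))
    rwa [ENNReal.mul_div_cancel two_ne_zero ENNReal.ofNat_ne_top] at h4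
  -- final assembly
  refine le_antisymm ?_ (zero_le)
  calc μp (A ∩ Km m) ≤ μp B := hsplit
    _ ≤ μp (Sk ∪ ⋃ j, Dm j) := measure_mono hBcover
    _ ≤ μp Sk + μp (⋃ j, Dm j) := measure_union_le _ _
    _ ≤ 0 + ∑' j, μp (Dm j) := add_le_add hSk0.le (measure_iUnion_le _)
    _ = 0 := by simp [hDm0]

end S8

/-- If `|μ(U)| ≤ C·H^{n-1}(∂U)` for all smooth `U ⊂⊂ Ω`, then `‖μ‖ ≪ H^{n-1}` in `Ω`. -/
theorem statement8 (n : ℕ) (Ω : Set (Eucl n)) (hΩ : IsOpen Ω)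
    (μp μn : Measure (Eucl n)) (hsing : μp.MutuallySingular μn)
    (hlfp : LocFinOn Ω μp) (hlfn : LocFinOn Ω μn) (C : ℝ)
    (hsm : ∀ U : Set (Eucl n), SmoothBoundedOpen U → closure U ⊆ Ω →
      ENNReal.ofReal |measVal μp μn U| ≤
        ENNReal.ofReal C * μH[((n : ℝ) - 1)] (frontier U)) :
    ∀ A : Set (Eucl n), A ⊆ Ω → MeasurableSet A → μH[((n : ℝ) - 1)] A = 0 →
      μp A = 0 ∧ μn A = 0 := by
  intro A hAΩ hAm hA0
  rcases Nat.eq_zero_or_pos n with hn | hn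
  · subst hn
    haveI : Subsingleton (Eucl 0) := ⟨fun a b => WithLp.ofLp_injective 2 (funext fun i => i.elim0)⟩
    have hAe : A = ∅ := by
      by_contra h
      obtain ⟨x, hx⟩ := Set.nonempty_iff_ne_empty.2 h
      have hle : (⊤ : ℝ≥0∞) • Measure.dirac x ≤ μH[((0 : ℕ) : ℝ) - 1] := by
        apply MeasureTheory.Measure.le_hausdorffMeasure _ _ 1 one_pos
        intro s _
        rw [EMetric.diam_subsingleton (Set.subsingleton_of_subsingleton),
          ENNReal.zero_rpow_of_neg (by norm_num)]
        exact le_top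
      have h2 := hle A
      rw [hA0] at h2
      simp only [Measure.smul_apply, smul_eq_mul, Measure.dirac_apply' _ hAm,
        Set.indicator_of_mem hx, nonpos_iff_eq_zero] at h2
      simp at h2
    subst hAe; simp
  · have h1 := S8.key hn Ω hΩ μp μn hsing hlfp hlfn C hsm A hAΩ hAm hA0
    have h2 := S8.key hn Ω hΩ μn μp hsing.symm hlfn hlfp C
      (fun U hU hUc => by
        have := hsm U hU hUc
        rwa [show |measVal μn μp U| = |measVal μp μn U| by
          unfold BVPaper.measVal; rw [abs_sub_comm]] )
      A hAΩ hAm hA0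
    exact ⟨h1, h2⟩
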